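/- Let u and v be strongly continuous one-parameter unitary groups on a Hilbert space H with selfadjoint generators A and B respectively. If there is a constant K such that ‖u(t) − v(t)‖ ≤ K|t| for all t in a neighborhood of 0, then dom A = dom B and A − B extends to a bounded operator C on H with ‖C‖ ≤ K (i.e., B = A + C with C bounded of norm at most K). -/

import Mathlib

open Filter Topology

/-- A one-parameter unitary group on a complex Hilbert space `H`. -/
def IsOneParamUnitaryGroup {H : Type*} [NormedAddCommGroup H] [InnerProductSpace ℂ H]
    [CompleteSpace H] (U : ℝ → (H →L[ℂ] H)) : Prop :=
  U 0 = 1 ∧ (∀ s t : ℝ, U (s + t) = U s * U t) ∧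
    (∀ t : ℝ, U t ∈ unitary (H →L[ℂ] H)) ∧ ∀ x : H, Continuous fun t : ℝ => U t x

/-- `A` is the generator of the one-parameter unitary group `u` (Stone's theorem). -/
def IsGenerator {H : Type*} [NormedAddCommGroup H] [InnerProductSpace ℂ H]
    [CompleteSpace H] (u : ℝ → (H →L[ℂ] H)) (A : H →ₗ.[ℂ] H) : Prop :=
  (∀ x : H, x ∈ A.domain ↔
      ∃ L : H, Tendsto (fun t : ℝ => (t : ℂ)⁻¹ • (u t x - x)) (𝓝[≠] (0 : ℝ)) (𝓝 L)) ∧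
    ∀ (x : H) (hx : x ∈ A.domain),
      Tendsto (fun t : ℝ => (t : ℂ)⁻¹ • (u t x - x)) (𝓝[≠] (0 : ℝ))
        (𝓝 (Complex.I • A ⟨x, hx⟩))

section Aux

local notation "⟪" x ", " y "⟫" => @inner ℂ _ _ x y

variable {H : Type*} [NormedAddCommGroup H] [InnerProductSpace ℂ H] [CompleteSpace H]

lemma opug_star {v : ℝ → (H →L[ℂ] H)} (hv : IsOneParamUnitaryGroup v) (t : ℝ) :
    star (v t) = v (-t) := by
  obtain ⟨h0, hmul, hun, -⟩ := hv
  have h1 : v t * v (-t) = 1 := by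
    rw [← hmul]; simpa using h0
  calc star (v t) = star (v t) * (v t * v (-t)) := by rw [h1, mul_one]
    _ = star (v t) * v t * v (-t) := (mul_assoc _ _ _).symm
    _ = v (-t) := by rw [(Unitary.mem_iff.mp (hun t)).1, one_mul]

lemma tendsto_neg_punctured : Tendsto (fun t : ℝ => -t) (𝓝[≠] (0 : ℝ)) (𝓝[≠] (0 : ℝ)) := by
  refine tendsto_nhdsWithin_iff.mpr ⟨?_, ?_⟩
  · exact (continuous_neg.tendsto' 0 0 (by simp)).mono_left nhdsWithin_le_nhds
  · filter_upwards [self_mem_nhdsWithin] with t ht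
    simpa using ht

lemma eventually_small : ∀ {ε : ℝ}, 0 < ε → ∀ᶠ t : ℝ in 𝓝[≠] (0 : ℝ), |t| < ε ∧ t ≠ 0 := by
  intro ε hε
  have h1 : ∀ᶠ t : ℝ in 𝓝 (0 : ℝ), |t| < ε := by
    have : Tendsto (fun t : ℝ => |t|) (𝓝 0) (𝓝 0) := by
      simpa using continuous_abs.tendsto (0 : ℝ)
    exact this.eventually_lt_const hε
  exact (eventually_nhdsWithin_of_eventually_nhds h1).and
    (by filter_upwards [self_mem_nhdsWithin] with t ht using ht)

/-- The key domain inclusion. -/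
lemma mem_domain_of_close {u v : ℝ → (H →L[ℂ] H)} (hu : IsOneParamUnitaryGroup u)
    (hv : IsOneParamUnitaryGroup v) {A B : H →ₗ.[ℂ] H} (hB : IsSelfAdjoint B)
    (hgenA : IsGenerator u A) (hgenB : IsGenerator v B)
    {K ε : ℝ} (hε : 0 < ε) (hKb : ∀ t : ℝ, |t| < ε → ‖u t - v t‖ ≤ K * |t|)
    {x : H} (hx : x ∈ A.domain) : x ∈ B.domain := by
  set a := A ⟨x, hx⟩ with ha
  have hu' : Tendsto (fun t : ℝ => ((-t : ℝ) : ℂ)⁻¹ • (u (-t) x - x)) (𝓝[≠] (0 : ℝ))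
      (𝓝 (Complex.I • a)) := (hgenA.2 x hx).comp tendsto_neg_punctured
  have key : ∀ y : B.domain, ‖⟪x, B y⟫‖ ≤ (‖a‖ + K * ‖x‖) * ‖(y : H)‖ := by
    intro y
    have hBy := hgenB.2 (y : H) y.2
    rw [Subtype.coe_eta] at hBy
    have h1 : Tendsto (fun t : ℝ => ⟪x, (t : ℂ)⁻¹ • (v t (y : H) - (y : H))⟫) (𝓝[≠] (0 : ℝ))
        (𝓝 ⟪x, Complex.I • B y⟫) := tendsto_const_nhds.inner hBy
    have hvt : ∀ t : ℝ, ⟪x, v t (y : H)⟫ = ⟪v (-t) x, (y : H)⟫ := by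
      intro t
      have hadj : v t = ContinuousLinearMap.adjoint (v (-t)) := by
        rw [← ContinuousLinearMap.star_eq_adjoint, opug_star hv, neg_neg]
      rw [hadj, ContinuousLinearMap.adjoint_inner_right]
    have heq : ∀ t : ℝ, ⟪x, (t : ℂ)⁻¹ • (v t (y : H) - (y : H))⟫
        = ⟪(t : ℂ)⁻¹ • (v (-t) x - x), (y : H)⟫ := by
      intro t
      rw [inner_smul_right, inner_smul_left, inner_sub_right, inner_sub_left, hvt t]
      simp [map_inv₀, Complex.conj_ofReal]
    have h1' : Tendsto (fun t : ℝ => ⟪(t : ℂ)⁻¹ • (v (-t) x - x), (y : H)⟫) (𝓝[≠] (0 : ℝ))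
        (𝓝 ⟪x, Complex.I • B y⟫) := h1.congr heq
    have hb : ∀ᶠ t : ℝ in 𝓝[≠] (0 : ℝ),
        ‖⟪(t : ℂ)⁻¹ • (v (-t) x - x), (y : H)⟫‖
          ≤ (‖((-t : ℝ) : ℂ)⁻¹ • (u (-t) x - x)‖ + K * ‖x‖) * ‖(y : H)‖ := by
      filter_upwards [eventually_small hε] with t ht
      obtain ⟨htε, ht0⟩ := ht
      refine (norm_inner_le_norm _ _).trans
        (mul_le_mul_of_nonneg_right ?_ (norm_nonneg _))
      have hsplit : (t : ℂ)⁻¹ • (v (-t) x - x)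
          = -(((-t : ℝ) : ℂ)⁻¹ • (u (-t) x - x)) + (t : ℂ)⁻¹ • ((v (-t) - u (-t)) x) := by
        have hc : ((-t : ℝ) : ℂ)⁻¹ = -(t : ℂ)⁻¹ := by push_cast; rw [inv_neg]
        rw [hc, ContinuousLinearMap.sub_apply]
        module
      rw [hsplit]
      refine (norm_add_le _ _).trans ?_
      rw [norm_neg]
      gcongr
      rw [norm_smul]
      have hop : ‖(v (-t) - u (-t)) x‖ ≤ (K * |t|) * ‖x‖ := by
        refine (ContinuousLinearMap.le_opNorm _ _).trans ?_
        have : ‖v (-t) - u (-t)‖ ≤ K * |t| := by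
          rw [norm_sub_rev]
          simpa [abs_neg] using hKb (-t) (by simpa [abs_neg] using htε)
        exact mul_le_mul_of_nonneg_right this (norm_nonneg _)
      have hnt : ‖((t : ℝ) : ℂ)⁻¹‖ = |t|⁻¹ := by
        rw [norm_inv, Complex.norm_real, Real.norm_eq_abs]
      rw [hnt]
      calc |t|⁻¹ * ‖(v (-t) - u (-t)) x‖ ≤ |t|⁻¹ * ((K * |t|) * ‖x‖) := by
            gcongr
        _ = (|t|⁻¹ * |t|) * (K * ‖x‖) := by ring
        _ = K * ‖x‖ := by rw [inv_mul_cancel₀ (abs_ne_zero.mpr ht0), one_mul]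
    have h2 : Tendsto (fun t : ℝ => (‖((-t : ℝ) : ℂ)⁻¹ • (u (-t) x - x)‖ + K * ‖x‖) * ‖(y : H)‖)
        (𝓝[≠] (0 : ℝ)) (𝓝 ((‖Complex.I • a‖ + K * ‖x‖) * ‖(y : H)‖)) :=
      (hu'.norm.add tendsto_const_nhds).mul_const _
    have hfin := le_of_tendsto_of_tendsto h1'.norm h2 hb
    have hIa : ‖Complex.I • a‖ = ‖a‖ := by
      rw [norm_smul, Complex.norm_I, one_mul]
    have hIB : ‖⟪x, Complex.I • B y⟫‖ = ‖⟪x, B y⟫‖ := by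
      rw [inner_smul_right, norm_mul, Complex.norm_I, one_mul]
    rw [hIa] at hfin
    rw [← hIB]
    exact hfin
  have hBadj : LinearPMap.adjoint B = B := LinearPMap.isSelfAdjoint_def.mp hB
  have hmem : x ∈ (LinearPMap.adjoint B).domain := by
    rw [LinearPMap.mem_adjoint_domain_iff]
    exact AddMonoidHomClass.continuous_of_bound ((innerₛₗ ℂ x).comp B.toFun) (‖a‖ + K * ‖x‖) key
  rwa [hBadj] at hmem

/-- The bound on the difference of the two generators. -/
lemma diff_le {u v : ℝ → (H →L[ℂ] H)} {A B : H →ₗ.[ℂ] H}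
    (hgenA : IsGenerator u A) (hgenB : IsGenerator v B)
    {K ε : ℝ} (hε : 0 < ε) (hKb : ∀ t : ℝ, |t| < ε → ‖u t - v t‖ ≤ K * |t|)
    {x : H} (hx : x ∈ A.domain) (hx' : x ∈ B.domain) :
    ‖B ⟨x, hx'⟩ - A ⟨x, hx⟩‖ ≤ K * ‖x‖ := by
  have h := (hgenB.2 x hx').sub (hgenA.2 x hx)
  have hb : ∀ᶠ t : ℝ in 𝓝[≠] (0 : ℝ),
      ‖(t : ℂ)⁻¹ • (v t x - x) - (t : ℂ)⁻¹ • (u t x - x)‖ ≤ K * ‖x‖ := by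
    filter_upwards [eventually_small hε] with t ht
    obtain ⟨htε, ht0⟩ := ht
    have : (t : ℂ)⁻¹ • (v t x - x) - (t : ℂ)⁻¹ • (u t x - x)
        = (t : ℂ)⁻¹ • ((v t - u t) x) := by
      rw [ContinuousLinearMap.sub_apply]
      module
    rw [this, norm_smul]
    have hnt : ‖((t : ℝ) : ℂ)⁻¹‖ = |t|⁻¹ := by
      rw [norm_inv, Complex.norm_real, Real.norm_eq_abs]
    rw [hnt]
    have hop : ‖(v t - u t) x‖ ≤ (K * |t|) * ‖x‖ := by
      refine (ContinuousLinearMap.le_opNorm _ _).trans ?_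
      have : ‖v t - u t‖ ≤ K * |t| := by
        rw [norm_sub_rev]; exact hKb t htε
      exact mul_le_mul_of_nonneg_right this (norm_nonneg _)
    calc |t|⁻¹ * ‖(v t - u t) x‖ ≤ |t|⁻¹ * ((K * |t|) * ‖x‖) := by gcongr
      _ = (|t|⁻¹ * |t|) * (K * ‖x‖) := by ring
      _ = K * ‖x‖ := by rw [inv_mul_cancel₀ (abs_ne_zero.mpr ht0), one_mul]
  have hfin := le_of_tendsto h.norm hb
  rw [← smul_sub, norm_smul, Complex.norm_I, one_mul] at hfin
  exact hfin

end Aux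

/-- If `‖u(t) − v(t)‖ ≤ K|t|` near `0`, then the selfadjoint generators
`A`, `B` of `u`, `v` have the same domain and `B = A + C` for a bounded operator `C` with
`‖C‖ ≤ K`. -/
theorem bounded_perturbation_of_norm_close {H : Type*} [NormedAddCommGroup H]
    [InnerProductSpace ℂ H] [CompleteSpace H] (u v : ℝ → (H →L[ℂ] H))
    (hu : IsOneParamUnitaryGroup u) (hv : IsOneParamUnitaryGroup v)
    (A B : H →ₗ.[ℂ] H) (hA : IsSelfAdjoint A) (hB : IsSelfAdjoint B)
    (hgenA : IsGenerator u A) (hgenB : IsGenerator v B) (K : ℝ)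
    (hK : ∃ ε > (0 : ℝ), ∀ t : ℝ, |t| < ε → ‖u t - v t‖ ≤ K * |t|) :
    A.domain = B.domain ∧
      ∃ C : H →L[ℂ] H, ‖C‖ ≤ K ∧
        ∀ (x : H) (hx : x ∈ A.domain) (hx' : x ∈ B.domain),
          B ⟨x, hx'⟩ = A ⟨x, hx⟩ + C x := by
  obtain ⟨ε, hε, hKb⟩ := hK
  have hKb' : ∀ t : ℝ, |t| < ε → ‖v t - u t‖ ≤ K * |t| := fun t ht => by
    rw [norm_sub_rev]; exact hKb t ht
  have hK0 : 0 ≤ K := by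
    have h1 := hKb (ε / 2) (by rw [abs_of_pos (by linarith)]; linarith)
    have h2 := norm_nonneg (u (ε / 2) - v (ε / 2))
    have h3 : |ε / 2| = ε / 2 := abs_of_pos (by linarith)
    rw [h3] at h1
    nlinarith
  have hdom : A.domain = B.domain := by
    apply le_antisymm
    · exact fun x hx => mem_domain_of_close hu hv hB hgenA hgenB hε hKb hx
    · exact fun x hx => mem_domain_of_close hv hu hA hgenB hgenA hε hKb' hx
  refine ⟨hdom, ?_⟩
  -- the densely defined difference operator
  let e : A.domain →ₗ[ℂ] B.domain := (LinearEquiv.ofEq A.domain B.domain hdom).toLinearMap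
  let C₀ : A.domain →ₗ[ℂ] H := B.toFun.comp e - A.toFun
  have hC₀ : ∀ z : A.domain, ‖C₀ z‖ ≤ K * ‖z‖ := by
    intro z
    have hz' : (z : H) ∈ B.domain := hdom ▸ z.2
    have h1 : C₀ z = B ⟨(z : H), hz'⟩ - A z := by
      have : e z = ⟨(z : H), hz'⟩ := Subtype.ext rfl
      simp only [C₀, LinearMap.sub_apply, LinearMap.comp_apply, this]
      rfl
    rw [h1]
    have := diff_le hgenA hgenB hε hKb (x := (z : H)) z.2 hz'
    simpa using this
  let C₁ : A.domain →L[ℂ] H := LinearMap.mkContinuous C₀ K hC₀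
  have hC₁ : ‖C₁‖ ≤ K := LinearMap.mkContinuous_norm_le _ hK0 _
  have hdense : Dense (A.domain : Set H) := hA.dense_domain
  let C : H →L[ℂ] H :=
    C₁.extend (Submodule.subtypeL A.domain)
  have hCnorm : ‖C‖ ≤ K := by
    have hb : ∀ z : A.domain, ‖z‖ ≤ (1 : NNReal) * ‖Submodule.subtypeL A.domain z‖ := by
      intro z; simp
    have := ContinuousLinearMap.opNorm_extend_le C₁ (e := Submodule.subtypeL A.domain)
      hdense.denseRange_val hb
    calc ‖C‖ ≤ (1 : NNReal) * ‖C₁‖ := this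
      _ = ‖C₁‖ := by simp
      _ ≤ K := hC₁
  refine ⟨C, hCnorm, ?_⟩
  intro x hx hx'
  have h1 : C x = C₁ ⟨x, hx⟩ := by
    have := ContinuousLinearMap.extend_eq C₁ (e := Submodule.subtypeL A.domain)
      hdense.denseRange_val isUniformEmbedding_subtype_val.isUniformInducing ⟨x, hx⟩
    simpa using this
  have h2 : C₁ ⟨x, hx⟩ = B ⟨x, hx'⟩ - A ⟨x, hx⟩ := by
    have : e ⟨x, hx⟩ = ⟨x, hx'⟩ := Subtype.ext rfl
    show C₀ ⟨x, hx⟩ = _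
    simp only [C₀, LinearMap.sub_apply, LinearMap.comp_apply, this]
    rfl
  rw [h1, h2]
  abel
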